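/- arXiv:1606.00507 — 2 statements merged into one kernel-verified Lean document; each statement's English description precedes it below -/
import Mathlib

section
/- Define psi(r1,r2,r3,L) = 1 if (r1,r2,r3) is a lattice point of P_3(L) (integers with even sum, nonnegative, satisfying the triangle inequalities and r1+r2+r3 <= 2L) and 0 otherwise. Then psi(r1,r2,r3,L) = psi(L-r1, L-r2, r3, L) for all integers 0 <= r1, r2 <= L. -/
/-- `psi r1 r2 r3 L` is `1` if `(r1, r2, r3)` is a lattice point of `P_3(L)`
(nonnegative, even coordinate sum, triangle inequalities, sum at most `2L`)
and `0` otherwise. -/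
def psi (r1 r2 r3 L : ℤ) : ℕ :=
  if (r1 + r2 + r3) % 2 = 0 ∧ 0 ≤ r1 ∧ 0 ≤ r2 ∧ 0 ≤ r3 ∧
      r1 ≤ r2 + r3 ∧ r2 ≤ r1 + r3 ∧ r3 ≤ r1 + r2 ∧ r1 + r2 + r3 ≤ 2 * L
  then 1 else 0

theorem stmt_9 (L r1 r2 r3 : ℤ) (hL : 0 ≤ L)
    (h1 : 0 ≤ r1) (h1' : r1 ≤ L) (h2 : 0 ≤ r2) (h2' : r2 ≤ L) :
    psi r1 r2 r3 L = psi (L - r1) (L - r2) r3 L := by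
  unfold psi
  have h : ((r1 + r2 + r3) % 2 = 0 ∧ 0 ≤ r1 ∧ 0 ≤ r2 ∧ 0 ≤ r3 ∧
      r1 ≤ r2 + r3 ∧ r2 ≤ r1 + r3 ∧ r3 ≤ r1 + r2 ∧ r1 + r2 + r3 ≤ 2 * L) ↔
      ((L - r1 + (L - r2) + r3) % 2 = 0 ∧ 0 ≤ L - r1 ∧ 0 ≤ L - r2 ∧ 0 ≤ r3 ∧
      L - r1 ≤ L - r2 + r3 ∧ L - r2 ≤ L - r1 + r3 ∧ r3 ≤ L - r1 + (L - r2) ∧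
      L - r1 + (L - r2) + r3 ≤ 2 * L) := by omega
  rw [if_congr h rfl rfl]
end

section
/- Every lattice point of P_3(L) (nonnegative integers x,y,z with even sum, triangle inequalities, x+y+z <= 2L) can be written as a sum of L lattice points of P_3(1), where the lattice points of P_3(1) are exactly (0,0,0), (1,1,0), (1,0,1), (0,1,1). -/
lemma aux_stmt_11 (L : ℕ) : ∀ a b c : ℕ, a + b + c ≤ L →
    ∃ f : Fin L → ℤ × ℤ × ℤ,
      (∀ i, f i ∈ ({(0, 0, 0), (1, 1, 0), (1, 0, 1), (0, 1, 1)} :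
        Set (ℤ × ℤ × ℤ))) ∧ ∑ i, f i = ((a : ℤ) + b, (a : ℤ) + c, (b : ℤ) + c) := by
  induction L with
  | zero =>
    intro a b c h
    refine ⟨fun _ => (0, 0, 0), fun i => by simp, ?_⟩
    have ha : a = 0 := by omega
    have hb : b = 0 := by omega
    have hc : c = 0 := by omega
    subst ha hb hc
    simp
    rfl
  | succ n ih =>
    intro a b c h
    rcases a with _ | a
    · rcases b with _ | b
      · rcases c with _ | c
        · obtain ⟨f, hf, hs⟩ := ih 0 0 0 (by omega)
          refine ⟨Fin.cons (0, 0, 0) f, ?_, ?_⟩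
          · intro i; refine Fin.cases ?_ ?_ i
            · simp
            · intro j; simpa using hf j
          · rw [Fin.sum_cons, hs]; simp
        · obtain ⟨f, hf, hs⟩ := ih 0 0 c (by omega)
          refine ⟨Fin.cons (0, 1, 1) f, ?_, ?_⟩
          · intro i; refine Fin.cases ?_ ?_ i
            · simp
            · intro j; simpa using hf j
          · rw [Fin.sum_cons, hs]
            simp only [Prod.mk_add_mk, Prod.mk.injEq]; push_cast
            exact ⟨trivial, by omega, by omega⟩
      · obtain ⟨f, hf, hs⟩ := ih 0 b c (by omega)
        refine ⟨Fin.cons (1, 0, 1) f, ?_, ?_⟩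
        · intro i; refine Fin.cases ?_ ?_ i
          · simp
          · intro j; simpa using hf j
        · rw [Fin.sum_cons, hs]
          simp only [Prod.mk_add_mk, Prod.mk.injEq]; push_cast; omega
    · obtain ⟨f, hf, hs⟩ := ih a b c (by omega)
      refine ⟨Fin.cons (1, 1, 0) f, ?_, ?_⟩
      · intro i; refine Fin.cases ?_ ?_ i
        · simp
        · intro j; simpa using hf j
      · rw [Fin.sum_cons, hs]
        simp only [Prod.mk_add_mk, Prod.mk.injEq]; push_cast; omega

theorem stmt_11 (L : ℕ) (hL : 0 < L) (x y z : ℤ)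
    (hx : 0 ≤ x) (hy : 0 ≤ y) (hz : 0 ≤ z) (hpar : Even (x + y + z))
    (h1 : x ≤ y + z) (h2 : y ≤ x + z) (h3 : z ≤ x + y)
    (hsum : x + y + z ≤ 2 * L) :
    ∃ f : Fin L → ℤ × ℤ × ℤ,
      (∀ i, f i ∈ ({(0, 0, 0), (1, 1, 0), (1, 0, 1), (0, 1, 1)} :
        Set (ℤ × ℤ × ℤ))) ∧ ∑ i, f i = (x, y, z) := by
  obtain ⟨k, hk⟩ := hpar
  have ha : 2 * (((x + y - z) / 2).toNat : ℤ) = x + y - z := by omega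
  have hb : 2 * (((x + z - y) / 2).toNat : ℤ) = x + z - y := by omega
  have hc : 2 * (((y + z - x) / 2).toNat : ℤ) = y + z - x := by omega
  obtain ⟨f, hf, hs⟩ := aux_stmt_11 L ((x + y - z) / 2).toNat ((x + z - y) / 2).toNat
    ((y + z - x) / 2).toNat (by omega)
  refine ⟨f, hf, ?_⟩
  rw [hs]
  simp only [Prod.mk.injEq]
  refine ⟨by omega, by omega, by omega⟩
end
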